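/- Let I be a radical ideal in a regular ring R containing a field, with big height h, and suppose Johnson's containment holds: for all positive integers q and non-negative integers a_1,...,a_q with a = a_1 + ... + a_q, one has I^{(a + qh)} ⊆ ∏_{i=1}^q I^{(a_i + 1)}. If I^{(s+1)} ⊆ closure(I^r) for some positive integers r, s, then for every positive integer q, I^{(q(s+h))} ⊆ closure(I^{qr}). -/

import Mathlib

/-- The set of elements integral over an ideal `I`. -/
def intClSet {R : Type*} [CommRing R] (I : Ideal R) : Set R :=
  {f | ∃ k : ℕ, 0 < k ∧ ∃ c : ℕ → R, (∀ i < k, c i ∈ I ^ (i + 1)) ∧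
    f ^ k + ∑ i ∈ Finset.range k, c i * f ^ (k - 1 - i) = 0}

/-- The integral closure of an ideal `I` (as an ideal: the span of the set of elements
integral over `I`; this set is in fact already an ideal). -/
def intCl {R : Type*} [CommRing R] (I : Ideal R) : Ideal R :=
  Ideal.span (intClSet I)

/-- The `s`-th symbolic power `I^{(s)} = ⋂_{P ∈ Ass(R/I)} (I^s R_P ∩ R)`. -/
noncomputable def symbPow {R : Type*} [CommRing R] (I : Ideal R) (s : ℕ) : Ideal R :=
  ⨅ P : {P : Ideal R // IsAssociatedPrime P (R ⧸ I)},
    haveI : P.1.IsPrime := P.2.1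
    Ideal.comap (algebraMap R (Localization.AtPrime P.1))
      (Ideal.map (algebraMap R (Localization.AtPrime P.1)) (I ^ s))

open Polynomial

/-- key determinant-trick lemma: if `span{f} * M ≤ K * M` with `M` f.g. and `f^N ∈ M`,
`N > 0`, then `f` is integral over `K`. -/
lemma mem_intClSet_of_fg {R : Type*} [CommRing R] {K M : Ideal R} (hM : M.FG)
    {f : R} (hfM : Ideal.span {f} * M ≤ K * M) {N : ℕ} (hN : 0 < N) (hfN : f ^ N ∈ M) :
    ∃ k : ℕ, 0 < k ∧ ∃ c : ℕ → R, (∀ i < k, c i ∈ K ^ (i + 1)) ∧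
      f ^ k + ∑ i ∈ Finset.range k, c i * f ^ (k - 1 - i) = 0 := by
  classical
  haveI : Module.Finite R M := Module.Finite.iff_fg.mpr hM
  have hmul : ∀ x : R, x ∈ M → f * x ∈ K * M := fun x hx =>
    hfM (Ideal.mul_mem_mul (Ideal.mem_span_singleton_self f) hx)
  let φ : M →ₗ[R] M :=
    { toFun := fun x => ⟨f * x.1, M.mul_mem_left f x.2⟩
      map_add' := fun x y => by ext; simp [mul_add]
      map_smul' := fun r x => by ext; simp [mul_comm, mul_left_comm] }
  have hrange : LinearMap.range φ ≤ K • (⊤ : Submodule R M) := by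
    rintro _ ⟨x, rfl⟩
    rw [Submodule.mem_smul_top_iff]
    exact hmul x.1 x.2
  obtain ⟨p, hmonic, -, hcoeff, haeval⟩ :=
    LinearMap.exists_monic_and_coeff_mem_pow_and_aeval_eq_zero_of_range_le_smul R φ K hrange
  set n := p.natDegree with hn
  have hpow : ∀ (i : ℕ) (x : M), ((φ ^ i) x : R) = f ^ i * x.1 := by
    intro i
    induction i with
    | zero => intro x; simp
    | succ i ih =>
      intro x
      rw [pow_succ, Module.End.mul_apply, ih]
      show f ^ i * (f * x.1) = f ^ (i + 1) * x.1
      ring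
  have key : ∑ i ∈ Finset.range (n + 1), p.coeff i * (f ^ i * f ^ N) = 0 := by
    have h0 : (∑ i ∈ Finset.range (n + 1), p.coeff i • (φ ^ i)) ⟨f ^ N, hfN⟩ = 0 := by
      rw [← Polynomial.aeval_eq_sum_range, haeval]
      rfl
    have h1 := congrArg (Subtype.val) h0
    simp only [LinearMap.sum_apply, LinearMap.smul_apply, Submodule.coe_sum,
      SetLike.val_smul, hpow, smul_eq_mul, ZeroMemClass.coe_zero] at h1
    exact h1
  refine ⟨n + N, by omega, fun j => if j < n then p.coeff (n - 1 - j) else 0, ?_, ?_⟩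
  · intro j hj
    by_cases hjn : j < n
    · simp only [if_pos hjn]
      have := hcoeff (n - 1 - j)
      have he : n - (n - 1 - j) = j + 1 := by omega
      rwa [he] at this
    · simp [if_neg hjn]
  · have hsum : ∑ j ∈ Finset.range (n + N),
        (if j < n then p.coeff (n - 1 - j) else 0) * f ^ (n + N - 1 - j)
        = ∑ j ∈ Finset.range n, p.coeff (n - 1 - j) * f ^ (n + N - 1 - j) := by
      rw [← Finset.sum_subset (Finset.range_subset_range.2 (by omega : n ≤ n + N))]
      · exact Finset.sum_congr rfl fun j hj => by
          rw [if_pos (Finset.mem_range.mp hj)]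
      · intro j _ hj
        rw [if_neg (by simpa using hj), zero_mul]
    rw [hsum]
    have hre : ∑ j ∈ Finset.range n, p.coeff (n - 1 - j) * f ^ (n + N - 1 - j)
        = ∑ i ∈ Finset.range n, p.coeff i * (f ^ i * f ^ N) := by
      rw [← Finset.sum_range_reflect (fun i => p.coeff i * (f ^ i * f ^ N)) n]
      refine Finset.sum_congr rfl fun j hj => ?_
      have hj' := Finset.mem_range.mp hj
      rw [← pow_add]
      congr 2
      omega
    rw [hre]
    have hlead : f ^ (n + N) = p.coeff n * (f ^ n * f ^ N) := by
      rw [hmonic.coeff_natDegree, one_mul, pow_add]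
    rw [hlead, add_comm]
    rw [Finset.sum_range_succ] at key
    exact key


/-- membership in a power comes from a f.g. subideal. -/
lemma exists_fg_of_mem_pow {R : Type*} [CommRing R] (J : Ideal R) (m : ℕ) :
    ∀ x ∈ J ^ m, ∃ J₀ : Ideal R, J₀.FG ∧ J₀ ≤ J ∧ x ∈ J₀ ^ m := by
  induction m with
  | zero => intro x _; exact ⟨⊥, Submodule.fg_bot, bot_le, by simp⟩
  | succ m ih =>
    intro x hx
    rw [pow_succ] at hx
    refine Submodule.mul_induction_on hx ?_ ?_
    · intro a ha b hb
      obtain ⟨J₀, hfg, hle, hmem⟩ := ih a ha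
      refine ⟨J₀ ⊔ Ideal.span {b}, Submodule.FG.sup hfg (Submodule.fg_span_singleton b),
        sup_le hle ((Ideal.span_singleton_le_iff_mem _).mpr hb), ?_⟩
      rw [pow_succ]
      exact Ideal.mul_mem_mul (Ideal.pow_right_mono le_sup_left _ hmem)
        (le_sup_right (α := Ideal R) (Ideal.mem_span_singleton_self b))
    · rintro a b ⟨Ja, hafg, hale, ha⟩ ⟨Jb, hbfg, hble, hb⟩
      exact ⟨Ja ⊔ Jb, Submodule.FG.sup hafg hbfg, sup_le hale hble,
        Ideal.add_mem _ (Ideal.pow_right_mono le_sup_left _ ha)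
          (Ideal.pow_right_mono le_sup_right _ hb)⟩

/-- forward direction: an integral element gives f.g. data. -/
lemma intClSet_data {R : Type*} [CommRing R] {J : Ideal R} {f : R} (hf : f ∈ intClSet J) :
    ∃ J₀ M : Ideal R, J₀ ≤ J ∧ M.FG ∧ Ideal.span {f} * M ≤ J₀ * M ∧
      ∃ N, 0 < N ∧ f ^ N ∈ M := by
  classical
  obtain ⟨k, hk, c, hc, heq⟩ := hf
  -- choose f.g. subideals for each coefficient
  choose J' hJ'fg hJ'le hJ'mem using fun i (hi : i < k) => exists_fg_of_mem_pow J (i + 1) (c i) (hc i hi)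
  let J₀ : Ideal R := (Finset.range k).sup fun i => if h : i < k then J' i h else ⊥
  have hJ₀fg : J₀.FG := Submodule.fg_finset_sup _ _ fun i _ => by
    by_cases h : i < k
    · simpa [h] using (show Submodule.FG (J' i h) from hJ'fg i h)
    · simpa [h] using Submodule.fg_bot
  have hJ₀le : J₀ ≤ J := Finset.sup_le fun i _ => by
    by_cases h : i < k
    · simpa [h] using hJ'le i h
    · simp [h]
  have hcJ₀ : ∀ i < k, c i ∈ J₀ ^ (i + 1) := fun i hi =>
    Ideal.pow_right_mono (by
      have : J' i hi ≤ J₀ := by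
        refine Finset.le_sup_of_le (Finset.mem_range.mpr hi) ?_
        simp [hi]
      exact this) _ (hJ'mem i hi)
  set T : Ideal R := J₀ ⊔ Ideal.span {f} with hT
  have hfk : f ^ k ∈ J₀ * T ^ (k - 1) := by
    have : f ^ k = -∑ i ∈ Finset.range k, c i * f ^ (k - 1 - i) := by
      linear_combination heq
    rw [this]
    refine neg_mem (Ideal.sum_mem _ fun i hi => ?_)
    have hi' := Finset.mem_range.mp hi
    have h1 : c i ∈ J₀ ^ (i + 1) := hcJ₀ i hi'
    have h2 : f ^ (k - 1 - i) ∈ Ideal.span {f} ^ (k - 1 - i) := by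
      rw [Ideal.span_singleton_pow]; exact Ideal.mem_span_singleton_self _
    have h3 : c i * f ^ (k - 1 - i) ∈ J₀ ^ (i + 1) * Ideal.span {f} ^ (k - 1 - i) :=
      Ideal.mul_mem_mul h1 h2
    refine Set.mem_of_subset_of_mem ?_ h3
    have : J₀ ^ (i + 1) * Ideal.span {f} ^ (k - 1 - i) ≤ J₀ * (J₀ ^ i * T ^ (k - 1 - i)) := by
      rw [pow_succ, mul_comm (J₀ ^ i) J₀, mul_assoc]
      exact Ideal.mul_mono le_rfl (Ideal.mul_mono le_rfl
        (Ideal.pow_right_mono le_sup_right _))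
    refine le_trans this ?_
    have h4 : J₀ ^ i * T ^ (k - 1 - i) ≤ T ^ (k - 1) := by
      have : J₀ ^ i * T ^ (k - 1 - i) ≤ T ^ i * T ^ (k - 1 - i) :=
        Ideal.mul_mono (Ideal.pow_right_mono le_sup_left _) le_rfl
      rw [← pow_add] at this
      have he : i + (k - 1 - i) = k - 1 := by omega
      rwa [he] at this
    exact Ideal.mul_mono le_rfl h4
  have step : ∀ m : ℕ, Ideal.span {f} * T ^ m ≤ J₀ * T ^ m ⊔ Ideal.span {f ^ (m + 1)} := by
    intro m
    induction m with
    | zero => simp [Ideal.mul_top]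
    | succ m ih =>
      have : Ideal.span {f} * T ^ (m + 1) = T * (Ideal.span {f} * T ^ m) := by ring
      rw [this]
      refine le_trans (Ideal.mul_mono le_rfl ih) ?_
      rw [Ideal.mul_sup]
      refine sup_le ?_ ?_
      · have : T * (J₀ * T ^ m) = J₀ * T ^ (m + 1) := by ring
        rw [this]; exact le_sup_left
      · rw [hT, Ideal.sup_mul]
        refine sup_le ?_ ?_
        · refine le_trans ?_ (le_sup_left (b := Ideal.span {f ^ (m + 2)}))
          have : Ideal.span {f ^ (m + 1)} ≤ T ^ (m + 1) := by
            rw [← Ideal.span_singleton_pow]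
            exact Ideal.pow_right_mono le_sup_right _
          exact le_trans (Ideal.mul_mono le_rfl this) le_rfl
        · rw [Ideal.span_singleton_mul_span_singleton, ← pow_succ']
          exact le_sup_right
  refine ⟨J₀, T ^ (k - 1), hJ₀le, ?_, ?_, k, hk, ?_⟩
  · exact Submodule.FG.pow (Submodule.FG.sup hJ₀fg (Submodule.fg_span_singleton f)) _
  · refine le_trans (step (k - 1)) (sup_le le_rfl ?_)
    rw [Ideal.span_singleton_le_iff_mem]
    have he : k - 1 + 1 = k := by omega
    rw [he]
    exact hfk
  · exact Ideal.mul_le_right hfk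


/-- product of integral elements is integral over the product ideal. -/
lemma intClSet_mul {R : Type*} [CommRing R] {J K : Ideal R} {f g : R}
    (hf : f ∈ intClSet J) (hg : g ∈ intClSet K) : f * g ∈ intClSet (J * K) := by
  obtain ⟨J₀, M₁, hJle, hM₁fg, hfM₁, N₁, hN₁, hfN₁⟩ := intClSet_data hf
  obtain ⟨K₀, M₂, hKle, hM₂fg, hgM₂, N₂, hN₂, hgN₂⟩ := intClSet_data hg
  set N := max N₁ N₂ with hN
  have hfN : f ^ N ∈ M₁ := by
    have : f ^ N = f ^ (N - N₁) * f ^ N₁ := by rw [← pow_add]; congr 1; omega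
    rw [this]; exact M₁.mul_mem_left _ hfN₁
  have hgN : g ^ N ∈ M₂ := by
    have : g ^ N = g ^ (N - N₂) * g ^ N₂ := by rw [← pow_add]; congr 1; omega
    rw [this]; exact M₂.mul_mem_left _ hgN₂
  have hmem : (f * g) ^ N ∈ M₁ * M₂ := by
    rw [mul_pow]; exact Ideal.mul_mem_mul hfN hgN
  have hle : Ideal.span {f * g} * (M₁ * M₂) ≤ (J * K) * (M₁ * M₂) := by
    rw [← Ideal.span_singleton_mul_span_singleton]
    have h1 : Ideal.span {f} * Ideal.span {g} * (M₁ * M₂)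
        = (Ideal.span {f} * M₁) * (Ideal.span {g} * M₂) := by ring
    rw [h1]
    calc (Ideal.span {f} * M₁) * (Ideal.span {g} * M₂)
        ≤ (J₀ * M₁) * (K₀ * M₂) := Ideal.mul_mono hfM₁ hgM₂
      _ = (J₀ * K₀) * (M₁ * M₂) := by ring
      _ ≤ (J * K) * (M₁ * M₂) :=
          Ideal.mul_mono (Ideal.mul_mono hJle hKle) le_rfl
  exact mem_intClSet_of_fg (Submodule.FG.mul hM₁fg hM₂fg) hle (lt_of_lt_of_le hN₁ (le_max_left _ _)) hmem

lemma intCl_mul_le {R : Type*} [CommRing R] (J K : Ideal R) :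
    intCl J * intCl K ≤ intCl (J * K) := by
  rw [intCl, intCl, Ideal.span_mul_span']
  rw [intCl, Ideal.span_le]
  rintro x ⟨a, ha, b, hb, rfl⟩
  exact Ideal.subset_span (intClSet_mul ha hb)

lemma intCl_pow_le {R : Type*} [CommRing R] (J : Ideal R) :
    ∀ q : ℕ, 0 < q → intCl J ^ q ≤ intCl (J ^ q) := by
  intro q hq
  obtain ⟨n, rfl⟩ : ∃ n, q = n + 1 := ⟨q - 1, by omega⟩
  clear hq
  induction n with
  | zero => simp
  | succ n ih =>
    calc intCl J ^ (n + 2) = intCl J ^ (n + 1) * intCl J := by ring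
      _ ≤ intCl (J ^ (n + 1)) * intCl J := Ideal.mul_mono ih le_rfl
      _ ≤ intCl (J ^ (n + 1) * J) := intCl_mul_le _ _
      _ = intCl (J ^ (n + 2)) := by rw [← pow_succ]


/-- If Johnson's containment `I^{(a+qh)} ⊆ ∏ I^{(aᵢ+1)}` holds for a radical ideal `I`
of big height `h`, and `I^{(s+1)} ⊆ closure(I^r)`, then `I^{(q(s+h))} ⊆ closure(I^{qr})`
for every positive integer `q`. -/
theorem stmt15 {R : Type*} [CommRing R] (I : Ideal R) (hrad : I.IsRadical) (h : ℕ)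
    (hJohnson : ∀ q : ℕ, 0 < q → ∀ a : Fin q → ℕ,
      symbPow I ((∑ i, a i) + q * h) ≤ ∏ i : Fin q, symbPow I (a i + 1))
    (r s : ℕ) (hr : 0 < r) (hs : 0 < s)
    (hc : symbPow I (s + 1) ≤ intCl (I ^ r)) :
    ∀ q : ℕ, 0 < q → symbPow I (q * (s + h)) ≤ intCl (I ^ (q * r)) := by
  intro q hq
  have hJ := hJohnson q hq (fun _ => s)
  have hsum : (∑ _i : Fin q, s) + q * h = q * (s + h) := by
    rw [Finset.sum_const, Finset.card_univ, Fintype.card_fin, smul_eq_mul, mul_add]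
  rw [hsum] at hJ
  refine le_trans hJ ?_
  have hprod : (∏ _i : Fin q, symbPow I (s + 1)) ≤ intCl (I ^ r) ^ q := by
    rw [Finset.prod_const, Finset.card_univ, Fintype.card_fin]
    exact pow_le_pow_left' hc q
  refine le_trans hprod (le_trans (intCl_pow_le _ q hq) ?_)
  rw [← pow_mul, mul_comm r q]
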